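/- Let X be a topological space, let κ be an infinite cardinal such that every weakly separated subset of X has cardinality at most κ, and let f : X → ℝ be a locally extremal function. Then the image f(X) has cardinality at most κ. -/

import Mathlib

open Cardinal

/-- A subset `A` of a topological space `X` is weakly separated if each point `a ∈ A`
can be assigned an open neighborhood `O a ⊆ X` such that for any two distinct points
`a, b ∈ A`, either `a ∉ O b` or `b ∉ O a`. -/
def WeaklySeparated {X : Type*} [TopologicalSpace X] (A : Set X) : Prop :=
  ∃ O : X → Set X, (∀ a ∈ A, IsOpen (O a) ∧ a ∈ O a) ∧
    ∀ a ∈ A, ∀ b ∈ A, a ≠ b → a ∉ O b ∨ b ∉ O a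

lemma ws_of_min {X : Type u} [TopologicalSpace X] (f : X → ℝ) (S : Set X)
    (hmin : ∀ x ∈ S, IsLocalMin f x) (hinj : Set.InjOn f S) : WeaklySeparated S := by
  have h : ∀ x ∈ S, ∃ U : Set X, (∀ y ∈ U, f x ≤ f y) ∧ IsOpen U ∧ x ∈ U := by
    intro x hx
    exact eventually_nhds_iff.1 (hmin x hx)
  choose! O hOle hOopen hOmem using h
  refine ⟨O, fun a ha => ⟨hOopen a ha, hOmem a ha⟩, ?_⟩
  intro a ha b hb hab
  rcases lt_trichotomy (f a) (f b) with h | h | h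
  · exact Or.inl fun hm => absurd (hOle b hb a hm) (not_le.2 h)
  · exact absurd (hinj ha hb h) hab
  · exact Or.inr fun hm => absurd (hOle a ha b hm) (not_le.2 h)

lemma ws_of_max {X : Type u} [TopologicalSpace X] (f : X → ℝ) (S : Set X)
    (hmax : ∀ x ∈ S, IsLocalMax f x) (hinj : Set.InjOn f S) : WeaklySeparated S := by
  refine ws_of_min (-f) S (fun x hx => (hmax x hx).neg) ?_
  intro a ha b hb h
  exact hinj ha hb (by simpa using congrArg Neg.neg h)

theorem stmt_3 {X : Type u} [TopologicalSpace X] (κ : Cardinal.{u}) (hκ : ℵ₀ ≤ κ)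
    (hws : ∀ A : Set X, WeaklySeparated A → #A ≤ κ)
    (f : X → ℝ) (hf : ∀ x : X, IsLocalMin f x ∨ IsLocalMax f x) :
    Cardinal.lift.{u} #(Set.range f) ≤ κ := by
  set Tmin : Set ℝ := {r | ∃ x, f x = r ∧ IsLocalMin f x} with hTmin
  set Tmax : Set ℝ := {r | ∃ x, f x = r ∧ IsLocalMax f x} with hTmax
  have key : ∀ (T : Set ℝ) (isMin : Bool),
      (∀ r ∈ T, ∃ x, f x = r ∧ (if isMin then IsLocalMin f x else IsLocalMax f x)) →
      Cardinal.lift.{u} #T ≤ κ := by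
    intro T isMin hT
    choose pick hpickf hpickP using fun r : T => hT r r.2
    have hpinj : Function.Injective pick := by
      intro r s h
      apply Subtype.ext
      rw [← hpickf r, ← hpickf s, h]
    have hSinj : Set.InjOn f (Set.range pick) := by
      rintro _ ⟨r, rfl⟩ _ ⟨s, rfl⟩ h
      exact congrArg pick (Subtype.ext (by rw [← hpickf r, ← hpickf s, h]))
    have hwsS : WeaklySeparated (Set.range pick) := by
      cases isMin with
      | true =>
        refine ws_of_min f _ ?_ hSinj
        rintro _ ⟨r, rfl⟩; simpa using hpickP r
      | false =>
        refine ws_of_max f _ ?_ hSinj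
        rintro _ ⟨r, rfl⟩; simpa using hpickP r
    have h1 : Cardinal.lift.{u} #T ≤ Cardinal.lift.{0} #(Set.range pick) :=
      Cardinal.lift_mk_le'.2 ⟨⟨fun r => ⟨pick r, Set.mem_range_self r⟩,
        fun r s h => hpinj (congrArg Subtype.val h)⟩⟩
    calc Cardinal.lift.{u} #T ≤ Cardinal.lift.{0} #(Set.range pick) := h1
      _ = #(Set.range pick) := Cardinal.lift_id'.{0,u} _
      _ ≤ κ := hws _ hwsS
  have hmin : Cardinal.lift.{u} #Tmin ≤ κ := key Tmin true (fun r hr => by simpa [hTmin, hTmax] using hr)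
  have hmax : Cardinal.lift.{u} #Tmax ≤ κ := key Tmax false (fun r hr => by simpa [hTmin, hTmax] using hr)
  have hsub : Set.range f ⊆ Tmin ∪ Tmax := by
    rintro _ ⟨x, rfl⟩
    rcases hf x with h | h
    · exact Or.inl ⟨x, rfl, h⟩
    · exact Or.inr ⟨x, rfl, h⟩
  calc Cardinal.lift.{u} #(Set.range f)
      ≤ Cardinal.lift.{u} #(Tmin ∪ Tmax : Set ℝ) :=
        Cardinal.lift_le.2 (Cardinal.mk_le_mk_of_subset hsub)
    _ ≤ Cardinal.lift.{u} (#Tmin + #Tmax) :=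
        Cardinal.lift_le.2 (Cardinal.mk_union_le _ _)
    _ = Cardinal.lift.{u} #Tmin + Cardinal.lift.{u} #Tmax := Cardinal.lift_add _ _
    _ ≤ κ := Cardinal.add_le_of_le hκ hmin hmax
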